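/- For every δ ∈ R: tr((ω𝓘)∧Q₋^δ + Q₋^δ∧(ω𝓘)) = 0, tr((ω𝓘)∧Q₊^δ + Q₊^δ∧(ω𝓘)) = −4(1+δ)·ω∧ω, and tr((ω𝓘)∧Q₀ + Q₀∧(ω𝓘)) = 16·ω∧ω. Consequently, for every m ∈ R and Q^δ_m := (1−δ+m)·Q₋^δ + (1+δ)·Q₊^δ + δ²·Q₀, one has tr((ω𝓘)∧Q^δ_m + Q^δ_m∧(ω𝓘)) = 4(4δ² − (1+δ)²)·ω∧ω. -/

import Mathlib

open Matrix

noncomputable section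

variable {R : Type*} [CommRing R] {M : Type*} [AddCommGroup M] [Module R M]

/-- `x` is a degree-1 element of the exterior algebra `Λ(M)`, i.e. it lies in the image of
the canonical inclusion `ι : M → Λ(M)`. -/
def IsDeg1 (x : ExteriorAlgebra R M) : Prop :=
  ∃ m : M, ExteriorAlgebra.ι R m = x

/-- `x` is a degree-2 element of the exterior algebra `Λ(M)`, i.e. an `R`-linear combination
of products of two degree-1 elements. -/
def IsDeg2 (x : ExteriorAlgebra R M) : Prop :=
  x ∈ (LinearMap.range (ExteriorAlgebra.ι R (M := M)) ^ 2 :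
    Submodule R (ExteriorAlgebra R M))

/-- For a 3×1 vector `a`, `box a = [a]` is the 3×3 matrix with rows
`(0, a₃, −a₂)`, `(−a₃, 0, a₁)`, `(a₂, −a₁, 0)`. -/
def box (a : Matrix (Fin 3) (Fin 1) (ExteriorAlgebra R M)) :
    Matrix (Fin 3) (Fin 3) (ExteriorAlgebra R M) :=
  !![0, a 2 0, -(a 1 0); -(a 2 0), 0, a 0 0; a 1 0, -(a 0 0), 0]

/-- The cross product `a × b` of 3×1 vectors over the exterior algebra. -/
def cross (a b : Matrix (Fin 3) (Fin 1) (ExteriorAlgebra R M)) :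
    Matrix (Fin 3) (Fin 1) (ExteriorAlgebra R M) :=
  !![a 1 0 * b 2 0 - a 2 0 * b 1 0;
     a 2 0 * b 0 0 - a 0 0 * b 2 0;
     a 0 0 * b 1 0 - a 1 0 * b 0 0]

/-- `ω = e₁∧f₁ + e₂∧f₂ + e₃∧f₃`. -/
def om (e f : Matrix (Fin 3) (Fin 1) (ExteriorAlgebra R M)) : ExteriorAlgebra R M :=
  e 0 0 * f 0 0 + e 1 0 * f 1 0 + e 2 0 * f 2 0

/-- `ImΩ = f₁∧e₂∧e₃ + f₂∧e₃∧e₁ + f₃∧e₁∧e₂ − f₁∧f₂∧f₃`. -/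
def imOm (e f : Matrix (Fin 3) (Fin 1) (ExteriorAlgebra R M)) : ExteriorAlgebra R M :=
  f 0 0 * e 1 0 * e 2 0 + f 1 0 * e 2 0 * e 0 0 + f 2 0 * e 0 0 * e 1 0
    - f 0 0 * f 1 0 * f 2 0

/-- A 7×7 matrix assembled from blocks of sizes 1, 3, 3. -/
def blk {α : Type*} (P : Matrix (Fin 1) (Fin 1) α) (Q S : Matrix (Fin 1) (Fin 3) α)
    (T : Matrix (Fin 3) (Fin 1) α) (U V : Matrix (Fin 3) (Fin 3) α)
    (W : Matrix (Fin 3) (Fin 1) α) (X Y : Matrix (Fin 3) (Fin 3) α) :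
    Matrix (Fin 1 ⊕ (Fin 3 ⊕ Fin 3)) (Fin 1 ⊕ (Fin 3 ⊕ Fin 3)) α :=
  Matrix.fromBlocks P (Matrix.fromCols Q S) (Matrix.fromRows T W)
    (Matrix.fromBlocks U V X Y)

/-- The 3×3 scalar diagonal matrix `x·I₃`. -/
def dg {α : Type*} [Zero α] (x : α) : Matrix (Fin 3) (Fin 3) α :=
  Matrix.diagonal fun _ => x

/-- The 7×7 block matrix `𝓘 = [[0,0,0],[0,0,−I],[0,I,0]]`. -/
def calI (α : Type*) [Ring α] :
    Matrix (Fin 1 ⊕ (Fin 3 ⊕ Fin 3)) (Fin 1 ⊕ (Fin 3 ⊕ Fin 3)) α :=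
  blk 0 0 0 0 0 (-1) 0 1 0

/-- `B = [[0, fᵀ, −eᵀ], [−f, 0, −e₀I], [e, e₀I, 0]]`. -/
def Bmat (e f : Matrix (Fin 3) (Fin 1) (ExteriorAlgebra R M)) (e0 : ExteriorAlgebra R M) :
    Matrix (Fin 1 ⊕ (Fin 3 ⊕ Fin 3)) (Fin 1 ⊕ (Fin 3 ⊕ Fin 3)) (ExteriorAlgebra R M) :=
  blk 0 (fᵀ) (-(eᵀ)) (-f) 0 (-(dg e0)) e (dg e0) 0

/-- `C = [[0, fᵀ, −eᵀ], [−f, −[e], e₀I+[f]], [e, −e₀I+[f], [e]]]`. -/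
def Cmat (e f : Matrix (Fin 3) (Fin 1) (ExteriorAlgebra R M)) (e0 : ExteriorAlgebra R M) :
    Matrix (Fin 1 ⊕ (Fin 3 ⊕ Fin 3)) (Fin 1 ⊕ (Fin 3 ⊕ Fin 3)) (ExteriorAlgebra R M) :=
  blk 0 (fᵀ) (-(eᵀ)) (-f) (-(box e)) (dg e0 + box f) e (-(dg e0) + box f) (box e)

/-- `F_A = [[0,0,0],[0,α,β],[0,−β,α]]`. -/
def FA (a b : Matrix (Fin 3) (Fin 3) (ExteriorAlgebra R M)) :
    Matrix (Fin 1 ⊕ (Fin 3 ⊕ Fin 3)) (Fin 1 ⊕ (Fin 3 ⊕ Fin 3)) (ExteriorAlgebra R M) :=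
  blk 0 0 0 0 a b 0 (-b) a

/-- `Q₋^δ = e₀ ∧ [[0, (1+δ)eᵀ, (1+δ)fᵀ], [−(1+δ)e, −2δ[f], −2δ[e]], [−(1+δ)f, −2δ[e], 2δ[f]]]`. -/
def Qminus (e f : Matrix (Fin 3) (Fin 1) (ExteriorAlgebra R M)) (e0 : ExteriorAlgebra R M)
    (δ : R) :
    Matrix (Fin 1 ⊕ (Fin 3 ⊕ Fin 3)) (Fin 1 ⊕ (Fin 3 ⊕ Fin 3)) (ExteriorAlgebra R M) :=
  (blk 0 ((1 + δ) • (eᵀ)) ((1 + δ) • (fᵀ))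
      (-((1 + δ) • e)) (-((2 * δ) • box f)) (-((2 * δ) • box e))
      (-((1 + δ) • f)) (-((2 * δ) • box e)) ((2 * δ) • box f)).map fun x => e0 * x

/-- `Q₊^δ`. -/
def Qplus (e f : Matrix (Fin 3) (Fin 1) (ExteriorAlgebra R M)) (δ : R) :
    Matrix (Fin 1 ⊕ (Fin 3 ⊕ Fin 3)) (Fin 1 ⊕ (Fin 3 ⊕ Fin 3)) (ExteriorAlgebra R M) :=
  blk 0 ((2 * δ) • ((cross e f)ᵀ)) (δ • ((cross e e - cross f f)ᵀ))
    (-((2 * δ) • cross e f)) (-((1 + δ) • (f * (fᵀ)))) ((1 + δ) • (f * (eᵀ)))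
    (-(δ • (cross e e - cross f f))) ((1 + δ) • (e * (fᵀ))) (-((1 + δ) • (e * (eᵀ))))

/-- `Q₀`. -/
def Qzero [Algebra ℚ R] (e f : Matrix (Fin 3) (Fin 1) (ExteriorAlgebra R M)) :
    Matrix (Fin 1 ⊕ (Fin 3 ⊕ Fin 3)) (Fin 1 ⊕ (Fin 3 ⊕ Fin 3)) (ExteriorAlgebra R M) :=
  (algebraMap ℚ R (1/2)) •
    blk 0 0 0
      0 (-(box (cross e e + cross f f))) (-((2 : R) • (box e * box f - box f * box e)))
      0 ((2 : R) • (box e * box f - box f * box e)) (-(box (cross e e + cross f f)))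

lemma anticomm {x y : ExteriorAlgebra R M} (hx : IsDeg1 x) (hy : IsDeg1 y) :
    x * y = -(y * x) := by
  obtain ⟨a, rfl⟩ := hx; obtain ⟨b, rfl⟩ := hy
  exact eq_neg_of_add_eq_zero_left (ExteriorAlgebra.ι_add_mul_swap a b)

lemma trace_key (w : ExteriorAlgebra R M)
    (A : Matrix (Fin 1 ⊕ (Fin 3 ⊕ Fin 3)) (Fin 1 ⊕ (Fin 3 ⊕ Fin 3)) (ExteriorAlgebra R M)) :
    Matrix.trace ((calI (ExteriorAlgebra R M)).map (fun x => w * x) * A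
      + A * (calI (ExteriorAlgebra R M)).map (fun x => w * x)) =
    w * (∑ i : Fin 3, (A (.inr (.inl i)) (.inr (.inr i)) - A (.inr (.inr i)) (.inr (.inl i))))
    + (∑ i : Fin 3, (A (.inr (.inl i)) (.inr (.inr i)) - A (.inr (.inr i)) (.inr (.inl i)))) * w := by
  simp [Matrix.trace, Matrix.diag, Fintype.sum_sum_type, Matrix.mul_apply, calI, blk,
    Matrix.fromBlocks, Matrix.fromRows_apply_inl, Matrix.fromRows_apply_inr, Matrix.fromCols, Fin.sum_univ_three, Fin.sum_univ_one,
    Matrix.map, mul_sub, sub_mul, mul_add, add_mul]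
  abel

lemma T_minus (e f : Matrix (Fin 3) (Fin 1) (ExteriorAlgebra R M)) (e0 : ExteriorAlgebra R M)
    (δ : R) :
    (∑ i : Fin 3, (Qminus e f e0 δ (.inr (.inl i)) (.inr (.inr i))
      - Qminus e f e0 δ (.inr (.inr i)) (.inr (.inl i)))) = 0 := by
  simp [Qminus, blk, box, Fin.sum_univ_three]

lemma T_plus (e f : Matrix (Fin 3) (Fin 1) (ExteriorAlgebra R M))
    (he : ∀ i, IsDeg1 (e i 0)) (hf : ∀ i, IsDeg1 (f i 0)) (δ : R) :
    (∑ i : Fin 3, (Qplus e f δ (.inr (.inl i)) (.inr (.inr i))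
      - Qplus e f δ (.inr (.inr i)) (.inr (.inl i)))) = (-(2 * (1 + δ))) • om e f := by
  simp [Qplus, blk, Matrix.mul_apply, Fin.sum_univ_three, Fin.sum_univ_one, om,
    anticomm (hf _) (he _)]
  module

lemma T_zero [Algebra ℚ R] (e f : Matrix (Fin 3) (Fin 1) (ExteriorAlgebra R M))
    (he : ∀ i, IsDeg1 (e i 0)) (hf : ∀ i, IsDeg1 (f i 0)) :
    (∑ i : Fin 3, (Qzero e f (.inr (.inl i)) (.inr (.inr i))
      - Qzero e f (.inr (.inr i)) (.inr (.inl i)))) = (8 : R) • om e f := by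
  have h : ∀ i j, f i 0 * e j 0 = -(e j 0 * f i 0) := fun i j => anticomm (hf i) (he j)
  simp only [Qzero, blk, Matrix.smul_apply, Matrix.fromBlocks_apply₂₂,
    Matrix.fromBlocks_apply₁₂, Matrix.fromBlocks_apply₂₁, Matrix.sub_apply, Matrix.neg_apply,
    Matrix.mul_apply, Matrix.add_apply, Fin.sum_univ_three]
  simp [box, cross, Fin.sum_univ_three, h, om]
  have hc : (2:R) * algebraMap ℚ R 2⁻¹ = 1 := by
    rw [← map_ofNat (algebraMap ℚ R) 2, ← _root_.map_mul]
    norm_num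
  match_scalars <;> linear_combination 8 * hc
theorem stmt13 [Algebra ℚ R] (e f : Matrix (Fin 3) (Fin 1) (ExteriorAlgebra R M))
    (e0 : ExteriorAlgebra R M)
    (he : ∀ i, IsDeg1 (e i 0)) (hf : ∀ i, IsDeg1 (f i 0)) (he0 : IsDeg1 e0) :
    ∀ δ m : R,
      Matrix.trace
        (((calI (ExteriorAlgebra R M)).map fun x => om e f * x) * Qminus e f e0 δ
          + Qminus e f e0 δ * ((calI (ExteriorAlgebra R M)).map fun x => om e f * x)) = 0 ∧
      Matrix.trace
        (((calI (ExteriorAlgebra R M)).map fun x => om e f * x) * Qplus e f δ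
          + Qplus e f δ * ((calI (ExteriorAlgebra R M)).map fun x => om e f * x))
        = (-(4 * (1 + δ))) • (om e f * om e f) ∧
      Matrix.trace
        (((calI (ExteriorAlgebra R M)).map fun x => om e f * x) * Qzero e f
          + Qzero e f * ((calI (ExteriorAlgebra R M)).map fun x => om e f * x))
        = (16 : R) • (om e f * om e f) ∧
      Matrix.trace
        (((calI (ExteriorAlgebra R M)).map fun x => om e f * x)
            * ((1 - δ + m) • Qminus e f e0 δ + (1 + δ) • Qplus e f δ + δ ^ 2 • Qzero e f)
          + ((1 - δ + m) • Qminus e f e0 δ + (1 + δ) • Qplus e f δ + δ ^ 2 • Qzero e f)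
            * ((calI (ExteriorAlgebra R M)).map fun x => om e f * x))
        = (4 * (4 * δ ^ 2 - (1 + δ) ^ 2)) • (om e f * om e f) := by
  intro δ m
  set w := om e f with hw
  set K := (calI (ExteriorAlgebra R M)).map (fun x => w * x) with hK
  have h1 : Matrix.trace (K * Qminus e f e0 δ + Qminus e f e0 δ * K) = 0 := by
    rw [trace_key, T_minus]; simp
  have h2 : Matrix.trace (K * Qplus e f δ + Qplus e f δ * K)
      = (-(4 * (1 + δ))) • (w * w) := by
    rw [trace_key, T_plus e f he hf, mul_smul_comm, smul_mul_assoc, ← add_smul]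
    module
  have h3 : Matrix.trace (K * Qzero e f + Qzero e f * K) = (16 : R) • (w * w) := by
    rw [trace_key, T_zero e f he hf, mul_smul_comm, smul_mul_assoc, ← add_smul]
    module
  refine ⟨h1, h2, h3, ?_⟩
  have expand : K * ((1 - δ + m) • Qminus e f e0 δ + (1 + δ) • Qplus e f δ + δ ^ 2 • Qzero e f)
      + ((1 - δ + m) • Qminus e f e0 δ + (1 + δ) • Qplus e f δ + δ ^ 2 • Qzero e f) * K
      = (1 - δ + m) • (K * Qminus e f e0 δ + Qminus e f e0 δ * K)
        + (1 + δ) • (K * Qplus e f δ + Qplus e f δ * K)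
        + δ ^ 2 • (K * Qzero e f + Qzero e f * K) := by
    simp only [Matrix.mul_add, Matrix.add_mul, Matrix.mul_smul, Matrix.smul_mul, smul_add]
    abel
  rw [expand, Matrix.trace_add, Matrix.trace_add, Matrix.trace_smul, Matrix.trace_smul,
    Matrix.trace_smul, h1, h2, h3, smul_zero, zero_add, smul_smul, smul_smul, ← add_smul]
  congr 1
  ring

end
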